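/- Let $I = \{i_1,\dots,i_k\}$ with $k$ even, and fix even numbers $p, q \geq 0$ with $p + q = k$. Then in $U(\mathfrak{o}_N)$ the splitting formula holds: $\mathrm{Pf}\,F_I = \frac{(p/2)!\,(q/2)!}{(k/2)!}\sum_{I = I'\sqcup I'',\ |I'| = p,\ |I''| = q} (-1)^{(I'I'')}\,\mathrm{Pf}\,F_{I'}\,\mathrm{Pf}\,F_{I''}$, where $(-1)^{(I'I'')}$ is the sign of the permutation of $I$ placing the elements of $I'$ first (in natural order) followed by those of $I''$ (in natural order). -/

import Mathlib

open scoped BigOperators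

/-- Index set `{-n, …, n}` for the split orthogonal Lie algebra `o_{2n+1}`. -/
abbrev Idx (n : ℕ) : Type := {i : ℤ // i ∈ Finset.Icc (-(n : ℤ)) (n : ℤ)}

namespace Idx
/-- Negation on the index set. -/
def neg {n : ℕ} (i : Idx n) : Idx n :=
  ⟨-i.1, by have := i.2; simp only [Finset.mem_Icc] at *; omega⟩
end Idx

/-- Noncommutative pfaffian of `F` along an enumeration `e : Fin (2m) → Idx n`:
`Pf = 1/(m! 2^m) ∑_σ sgn σ · F_{-e(σ 1), e(σ 2)} ⋯ F_{-e(σ(2m-1)), e(σ(2m))}`. -/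
noncomputable def PfEnum {A : Type*} [Ring A] [Algebra ℚ A] {n : ℕ}
    (F : Idx n → Idx n → A) (m : ℕ) (e : Fin (2 * m) → Idx n) : A :=
  ((m.factorial : ℚ) * 2 ^ m)⁻¹ •
    ∑ σ : Equiv.Perm (Fin (2 * m)),
      (Equiv.Perm.sign σ : ℤ) •
        (List.ofFn fun t : Fin m =>
          F (Idx.neg (e (σ ⟨2 * t.1, by have := t.2; omega⟩)))
            (e (σ ⟨2 * t.1 + 1, by have := t.2; omega⟩))).prod

/-- Noncommutative pfaffian `Pf F_I` of an (even-cardinality) indexing set `I`,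
using the increasing enumeration of `I`. -/
noncomputable def PfSet {A : Type*} [Ring A] [Algebra ℚ A] {n : ℕ}
    (F : Idx n → Idx n → A) (I : Finset (Idx n)) : A :=
  PfEnum F (I.card / 2) fun t =>
    (I.orderIsoOfFin rfl ⟨t.1, by have := t.2; omega⟩).1

/-- The defining commutation relations of the generators `F_{ij}` of `o_N`. -/
def OrthRel {A : Type*} [Ring A] {n : ℕ} (F : Idx n → Idx n → A) : Prop :=
  ∀ i j k l : Idx n,
    F i j * F k l - F k l * F i j =
      (if k = j then F i l else 0) - (if i = l then F k j else 0)
        - (if Idx.neg k = i then F (Idx.neg j) l else 0)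
        + (if Idx.neg l = j then F k (Idx.neg i) else 0)

/-- The skew-symmetry `F_{ij} = -F_{-j,-i}` of the generators. -/
def OrthSkew {A : Type*} [Ring A] {n : ℕ} (F : Idx n → Idx n → A) : Prop :=
  ∀ i j : Idx n, F i j = - F (Idx.neg j) (Idx.neg i)

/-- Sign of an arrangement (list) of elements of a linearly ordered type:
`(-1)^(number of inversions)`. -/
def arrSign {ι : Type*} [LinearOrder ι] (l : List ι) : ℤ :=
  (-1) ^ (((Finset.univ : Finset (Fin l.length × Fin l.length)).filter
      fun p => p.1 < p.2 ∧ l.get p.2 < l.get p.1).card)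

/-- Shuffle sign `(-1)^{(I'I'')}` of the permutation placing `I'` (in natural order)
before `I''` (in natural order). -/
def shuffleSign {ι : Type*} [LinearOrder ι] (I' I'' : Finset ι) : ℤ :=
  arrSign (I'.sort (· ≤ ·) ++ I''.sort (· ≤ ·))

/-! ### Auxiliary machinery for the proof of statement 8. -/

section SignLemmas

lemma mySign_eq_signAux {k : ℕ} (σ : Equiv.Perm (Fin k)) :
    Equiv.Perm.sign σ = Equiv.Perm.signAux σ := by
  refine Equiv.Perm.swap_induction_on σ (by simp) ?_
  intro f x y hxy ih
  rw [Equiv.Perm.sign_mul, Equiv.Perm.signAux_mul, ih, Equiv.Perm.sign_swap hxy,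
    Equiv.Perm.signAux_swap hxy]

lemma mySign_eq_pow {k : ℕ} (σ : Equiv.Perm (Fin k)) :
    ((Equiv.Perm.sign σ : ℤˣ) : ℤ) =
      (-1) ^ ((Finset.univ.filter fun p : Fin k × Fin k =>
        p.1 < p.2 ∧ σ p.2 < σ p.1).card) := by
  rw [mySign_eq_signAux]
  unfold Equiv.Perm.signAux
  rw [← Finset.prod_filter, Finset.prod_const]
  have hcard : ((Equiv.Perm.finPairsLT k).filter fun x => σ x.1 ≤ σ x.2).card
      = ((Finset.univ : Finset (Fin k × Fin k)).filter fun p =>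
          p.1 < p.2 ∧ σ p.2 < σ p.1).card := by
    refine Finset.card_bij' (fun x _ => (x.2, x.1)) (fun p _ => ⟨p.2, p.1⟩) ?_ ?_ ?_ ?_
    · rintro ⟨x1, x2⟩ hx
      simp only [Finset.mem_filter, Equiv.Perm.mem_finPairsLT] at hx ⊢
      refine ⟨Finset.mem_univ _, hx.1, lt_of_le_of_ne hx.2 ?_⟩
      intro h
      exact absurd (σ.injective h.symm) (ne_of_lt hx.1)
    · rintro ⟨p1, p2⟩ hp
      simp only [Finset.mem_filter, Equiv.Perm.mem_finPairsLT, Finset.mem_univ, true_and] at hp ⊢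
      exact ⟨hp.1, hp.2.le⟩
    · intros; rfl
    · intros; rfl
  rw [hcard]
  push_cast
  rfl

lemma arrSign_eq_sign {α : Type*} [LinearOrder α] {k : ℕ} (f : Fin k → α) (hf : StrictMono f)
    (π : Equiv.Perm (Fin k)) (l : List α) (hl : l.length = k)
    (hget : ∀ i : Fin l.length, l.get i = f (π (Fin.cast hl i))) :
    arrSign l = ((Equiv.Perm.sign π : ℤˣ) : ℤ) := by
  rw [mySign_eq_pow]
  unfold arrSign
  congr 1
  refine Finset.card_bij' (fun p _ => (Fin.cast hl p.1, Fin.cast hl p.2))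
    (fun p _ => (Fin.cast hl.symm p.1, Fin.cast hl.symm p.2)) ?_ ?_ ?_ ?_
  · rintro ⟨i, j⟩ hp
    simp only [Finset.mem_filter, Finset.mem_univ, true_and] at hp ⊢
    refine ⟨hp.1, ?_⟩
    have := hp.2
    rw [hget i, hget j] at this
    exact hf.lt_iff_lt.mp this
  · rintro ⟨i, j⟩ hp
    simp only [Finset.mem_filter, Finset.mem_univ, true_and] at hp ⊢
    refine ⟨hp.1, ?_⟩
    rw [hget (Fin.cast hl.symm j), hget (Fin.cast hl.symm i)]
    apply hf.lt_iff_lt.mpr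
    have hji : π j < π i := hp.2
    have e1 : π (Fin.cast hl (Fin.cast hl.symm i)) = π i := by congr 1
    have e2 : π (Fin.cast hl (Fin.cast hl.symm j)) = π j := by congr 1
    rw [e1, e2]; exact hji
  · intro p _; ext <;> simp
  · intro p _; ext <;> simp

end SignLemmas

section Shuffle
variable {p2 q2 : ℕ}

/-- The equivalence `Fin 2p₂ ⊕ Fin 2q₂ ≃ Fin (2(p₂+q₂))`. -/
def mixEquiv (p2 q2 : ℕ) : (Fin (2*p2) ⊕ Fin (2*q2)) ≃ Fin (2*(p2+q2)) :=
  finSumFinEquiv.trans (finCongr (by ring))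

lemma mixEquiv_inl (u : Fin (2*p2)) : (mixEquiv p2 q2 (Sum.inl u) : ℕ) = u := rfl

lemma mixEquiv_inr (v : Fin (2*q2)) : (mixEquiv p2 q2 (Sum.inr v) : ℕ) = 2*p2 + v := rfl

variable (T : Finset (Fin (2*(p2+q2))))

lemma card_compl_T (hT : T.card = 2*p2) : Tᶜ.card = 2*q2 := by
  rw [Finset.card_compl, Fintype.card_fin, hT]; omega

/-- The "shuffle" permutation determined by `T`: it sends the first `2p₂` indices
increasingly onto `T` and the rest increasingly onto `Tᶜ`. -/
def rhoPerm (hT : T.card = 2*p2) : Equiv.Perm (Fin (2*(p2+q2))) :=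
  (mixEquiv p2 q2).symm.trans
    ((Equiv.sumCongr (T.orderIsoOfFin hT).toEquiv
        ((Tᶜ.orderIsoOfFin (card_compl_T T hT)).toEquiv.trans
          (Equiv.subtypeEquivRight fun x => Finset.mem_compl))).trans
      (Equiv.sumCompl (· ∈ T)))

lemma rhoPerm_inl (hT : T.card = 2*p2) (u : Fin (2*p2)) :
    rhoPerm T hT (mixEquiv p2 q2 (Sum.inl u)) = T.orderEmbOfFin hT u := by
  simp [rhoPerm, ← Finset.coe_orderIsoOfFin_apply]

lemma rhoPerm_inr (hT : T.card = 2*p2) (v : Fin (2*q2)) :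
    rhoPerm T hT (mixEquiv p2 q2 (Sum.inr v)) = Tᶜ.orderEmbOfFin (card_compl_T T hT) v := by
  simp [rhoPerm, ← Finset.coe_orderIsoOfFin_apply]

/-- The permutation obtained from the shuffle by `T` together with permutations of the
two blocks. -/
def phiPerm (hT : T.card = 2*p2) (τ₁ : Equiv.Perm (Fin (2*p2))) (τ₂ : Equiv.Perm (Fin (2*q2))) :
    Equiv.Perm (Fin (2*(p2+q2))) :=
  rhoPerm T hT * (mixEquiv p2 q2).permCongr (τ₁.sumCongr τ₂)

lemma phiPerm_inl (hT : T.card = 2*p2) (τ₁ : Equiv.Perm (Fin (2*p2)))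
    (τ₂ : Equiv.Perm (Fin (2*q2))) (u : Fin (2*p2)) :
    phiPerm T hT τ₁ τ₂ (mixEquiv p2 q2 (Sum.inl u)) = T.orderEmbOfFin hT (τ₁ u) := by
  have : (mixEquiv p2 q2).permCongr (τ₁.sumCongr τ₂) (mixEquiv p2 q2 (Sum.inl u))
      = mixEquiv p2 q2 (Sum.inl (τ₁ u)) := by
    simp [Equiv.permCongr_apply]
  rw [phiPerm, Equiv.Perm.mul_apply, this, rhoPerm_inl]

lemma phiPerm_inr (hT : T.card = 2*p2) (τ₁ : Equiv.Perm (Fin (2*p2)))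
    (τ₂ : Equiv.Perm (Fin (2*q2))) (v : Fin (2*q2)) :
    phiPerm T hT τ₁ τ₂ (mixEquiv p2 q2 (Sum.inr v))
      = Tᶜ.orderEmbOfFin (card_compl_T T hT) (τ₂ v) := by
  have : (mixEquiv p2 q2).permCongr (τ₁.sumCongr τ₂) (mixEquiv p2 q2 (Sum.inr v))
      = mixEquiv p2 q2 (Sum.inr (τ₂ v)) := by
    simp [Equiv.permCongr_apply]
  rw [phiPerm, Equiv.Perm.mul_apply, this, rhoPerm_inr]

lemma sign_phiPerm (hT : T.card = 2*p2) (τ₁ : Equiv.Perm (Fin (2*p2)))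
    (τ₂ : Equiv.Perm (Fin (2*q2))) :
    Equiv.Perm.sign (phiPerm T hT τ₁ τ₂)
      = Equiv.Perm.sign (rhoPerm T hT) * Equiv.Perm.sign τ₁ * Equiv.Perm.sign τ₂ := by
  rw [phiPerm, Equiv.Perm.sign_mul, Equiv.Perm.sign_permCongr, Equiv.Perm.sign_sumCongr, mul_assoc]

lemma phi_bijective (p2 q2 : ℕ) :
    Function.Bijective (fun x : {T : Finset (Fin (2*(p2+q2))) // T.card = 2*p2}
        × Equiv.Perm (Fin (2*p2)) × Equiv.Perm (Fin (2*q2)) =>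
      phiPerm x.1.1 x.1.2 x.2.1 x.2.2) := by
  rw [Fintype.bijective_iff_injective_and_card]
  constructor
  · have key : ∀ (T : Finset (Fin (2*(p2+q2)))) (hT : T.card = 2*p2)
        (τ₁ : Equiv.Perm (Fin (2*p2))) (τ₂ : Equiv.Perm (Fin (2*q2))),
        T = Finset.image (fun u : Fin (2*p2) =>
          phiPerm T hT τ₁ τ₂ (mixEquiv p2 q2 (Sum.inl u))) Finset.univ := by
      intro T hT τ₁ τ₂
      ext x
      simp only [Finset.mem_image, Finset.mem_univ, true_and, phiPerm_inl]
      constructor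
      · intro hx
        refine ⟨τ₁.symm ((T.orderIsoOfFin hT).symm ⟨x, hx⟩), ?_⟩
        rw [Equiv.apply_symm_apply, ← Finset.coe_orderIsoOfFin_apply, OrderIso.apply_symm_apply]
      · rintro ⟨u, rfl⟩
        exact Finset.orderEmbOfFin_mem T hT (τ₁ u)
    rintro ⟨⟨T, hT⟩, τ₁, τ₂⟩ ⟨⟨T', hT'⟩, τ₁', τ₂'⟩ h
    dsimp only at h
    have hTT : T = T' := by
      rw [key T hT τ₁ τ₂, key T' hT' τ₁' τ₂', h]
    subst hTT
    have hrho : rhoPerm T hT = rhoPerm T hT' := rfl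
    have hmul : (mixEquiv p2 q2).permCongr (τ₁.sumCongr τ₂)
        = (mixEquiv p2 q2).permCongr (τ₁'.sumCongr τ₂') := by
      have := h
      rw [phiPerm, phiPerm, ← hrho] at this
      exact mul_left_cancel this
    have hsum : τ₁.sumCongr τ₂ = τ₁'.sumCongr τ₂' :=
      (Equiv.permCongr (mixEquiv p2 q2)).injective hmul
    have h1 : τ₁ = τ₁' :=
      Equiv.ext fun u => by
        simpa using congrArg (fun e : Equiv.Perm _ => e (Sum.inl u)) hsum
    have h2 : τ₂ = τ₂' :=
      Equiv.ext fun v => by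
        simpa using congrArg (fun e : Equiv.Perm _ => e (Sum.inr v)) hsum
    simp [h1, h2]
  · simp only [Fintype.card_prod, Fintype.card_perm, Fintype.card_fin]
    rw [Fintype.card_finset_len, Fintype.card_fin]
    rw [← mul_assoc]
    have h1 : 2*p2 ≤ 2*(p2+q2) := by omega
    have h2 := Nat.choose_mul_factorial_mul_factorial h1
    rwa [show 2*(p2+q2) - 2*p2 = 2*q2 from by omega] at h2

end Shuffle

section ShuffleSign

lemma emb_image_eq {α : Type*} [LinearOrder α] {N k : ℕ} (S : Finset (Fin N)) (hS : S.card = k)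
    (f : Fin N → α) (hf : StrictMono f) :
    (fun u : Fin k => f (S.orderEmbOfFin hS u)) = (S.image f).orderEmbOfFin
      (by rw [Finset.card_image_of_injective _ hf.injective, hS]) := by
  apply Finset.orderEmbOfFin_unique
  · intro u
    exact Finset.mem_image_of_mem f (Finset.orderEmbOfFin_mem S hS u)
  · exact hf.comp (S.orderEmbOfFin hS).strictMono

lemma shuffleSign_eq_sign {α : Type*} [LinearOrder α] {p2 q2 : ℕ}
    (T : Finset (Fin (2*(p2+q2)))) (hT : T.card = 2*p2)
    (f : Fin (2*(p2+q2)) → α) (hf : StrictMono f) :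
    shuffleSign (T.image f) (Tᶜ.image f) = ((Equiv.Perm.sign (rhoPerm T hT) : ℤˣ) : ℤ) := by
  have hc1 : (T.image f).card = 2*p2 := by
    rw [Finset.card_image_of_injective _ hf.injective, hT]
  have hc2 : (Tᶜ.image f).card = 2*q2 := by
    rw [Finset.card_image_of_injective _ hf.injective, card_compl_T T hT]
  unfold shuffleSign
  have hlen1 : ((T.image f).sort (· ≤ ·)).length = 2*p2 := by rw [Finset.length_sort, hc1]
  have hlen2 : ((Tᶜ.image f).sort (· ≤ ·)).length = 2*q2 := by rw [Finset.length_sort, hc2]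
  have hl : ((T.image f).sort (· ≤ ·) ++ (Tᶜ.image f).sort (· ≤ ·)).length = 2*(p2+q2) := by
    rw [List.length_append, hlen1, hlen2]; ring
  apply arrSign_eq_sign f hf (rhoPerm T hT) _ hl
  intro i
  have hiv : (i : ℕ) < 2*(p2+q2) := by have := i.2; omega
  rw [List.get_eq_getElem]
  by_cases hi : (i : ℕ) < 2*p2
  · rw [List.getElem_append_left (by omega : (i:ℕ) < ((T.image f).sort (· ≤ ·)).length)]
    have hcast : Fin.cast hl i = mixEquiv p2 q2 (Sum.inl ⟨i, hi⟩) :=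
      Fin.ext (by rw [mixEquiv_inl]; rfl)
    rw [hcast, rhoPerm_inl]
    have := congrFun (emb_image_eq T hT f hf) ⟨(i:ℕ), hi⟩
    rw [this]
    rw [Finset.orderEmbOfFin_apply]
    rfl
  · rw [List.getElem_append_right (by omega : ((T.image f).sort (· ≤ ·)).length ≤ (i:ℕ))]
    have hcast : Fin.cast hl i = mixEquiv p2 q2 (Sum.inr ⟨(i:ℕ) - 2*p2, by omega⟩) := by
      apply Fin.ext
      rw [mixEquiv_inr]
      show (i : ℕ) = 2*p2 + ((i:ℕ) - 2*p2)
      omega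
    rw [hcast, rhoPerm_inr]
    have := congrFun (emb_image_eq Tᶜ (card_compl_T T hT) f hf) ⟨(i:ℕ) - 2*p2, by omega⟩
    rw [this]
    rw [Finset.orderEmbOfFin_apply]
    simp only [hlen1]
    rfl

end ShuffleSign

section PfLemmas

variable {A : Type*} [Ring A] [Algebra ℚ A] {n : ℕ}

/-- The unscaled signed sum appearing in the pfaffian. -/
noncomputable def Ssum (F : Idx n → Idx n → A) {m : ℕ} (e : Fin (2 * m) → Idx n) : A :=
  ∑ σ : Equiv.Perm (Fin (2 * m)),
    (Equiv.Perm.sign σ : ℤ) •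
      (List.ofFn fun t : Fin m =>
        F (Idx.neg (e (σ ⟨2 * t.1, by have := t.2; omega⟩)))
          (e (σ ⟨2 * t.1 + 1, by have := t.2; omega⟩))).prod

lemma pfEnum_eq_ssum (F : Idx n → Idx n → A) (m : ℕ) (e : Fin (2*m) → Idx n) :
    PfEnum F m e = ((m.factorial : ℚ) * 2 ^ m)⁻¹ • Ssum F e := rfl

lemma pfEnum_congr (F : Idx n → Idx n → A) {m m' : ℕ} (h : m = m')
    (e : Fin (2*m) → Idx n) (e' : Fin (2*m') → Idx n)
    (he : ∀ t : Fin (2*m), e t = e' ⟨t.1, by omega⟩) :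
    PfEnum F m e = PfEnum F m' e' := by
  subst h
  obtain rfl : e = e' := funext fun t => he t
  rfl

lemma pfSet_eq (F : Idx n → Idx n → A) (I : Finset (Idx n)) (m : ℕ) (h : I.card = 2*m) :
    PfSet F I = PfEnum F m (fun t => I.orderEmbOfFin h t) := by
  rw [PfSet]
  refine pfEnum_congr F (by omega : I.card / 2 = m) _ _ ?_
  intro t
  rw [Finset.coe_orderIsoOfFin_apply]
  exact Finset.orderEmbOfFin_eq_orderEmbOfFin_iff.mpr rfl

lemma ssum_split (F : Idx n → Idx n → A)
    (p2 q2 : ℕ) (e : Fin (2*(p2+q2)) → Idx n) :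
    Ssum F e = ∑ T : {T : Finset (Fin (2*(p2+q2))) // T.card = 2*p2},
      ((Equiv.Perm.sign (rhoPerm T.1 T.2) : ℤˣ) : ℤ) •
        (Ssum F (fun v : Fin (2*p2) => e (T.1.orderEmbOfFin T.2 v)) *
         Ssum F (fun v : Fin (2*q2) => e ((T.1)ᶜ.orderEmbOfFin (card_compl_T T.1 T.2) v))) := by
  rw [Ssum]
  rw [← (Fintype.sum_bijective _ (phi_bijective p2 q2) _ _ (fun x => rfl))]
  rw [Fintype.sum_prod_type]
  refine Finset.sum_congr rfl fun T _ => ?_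
  rw [Fintype.sum_prod_type]
  obtain ⟨T, hT⟩ := T
  dsimp only
  conv_rhs => rw [Ssum, Ssum, Finset.sum_mul_sum, Finset.smul_sum]
  refine Finset.sum_congr rfl fun τ₁ _ => ?_
  conv_rhs => rw [Finset.smul_sum]
  refine Finset.sum_congr rfl fun τ₂ _ => ?_
  have key1 : ∀ (x : Fin (2*(p2+q2))) (y : Fin (2*p2)), (x:ℕ) = (y:ℕ) →
      phiPerm T hT τ₁ τ₂ x = T.orderEmbOfFin hT (τ₁ y) := by
    intro x y hxy
    have : x = mixEquiv p2 q2 (Sum.inl y) := Fin.ext (by rw [mixEquiv_inl]; exact hxy)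
    rw [this, phiPerm_inl]
  have key2 : ∀ (x : Fin (2*(p2+q2))) (y : Fin (2*q2)), (x:ℕ) = 2*p2 + (y:ℕ) →
      phiPerm T hT τ₁ τ₂ x = Tᶜ.orderEmbOfFin (card_compl_T T hT) (τ₂ y) := by
    intro x y hxy
    have : x = mixEquiv p2 q2 (Sum.inr y) := Fin.ext (by rw [mixEquiv_inr]; exact hxy)
    rw [this, phiPerm_inr]
  have hword : (List.ofFn fun t : Fin (p2+q2) =>
        F (Idx.neg (e (phiPerm T hT τ₁ τ₂ ⟨2 * t.1, by have := t.2; omega⟩)))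
          (e (phiPerm T hT τ₁ τ₂ ⟨2 * t.1 + 1, by have := t.2; omega⟩))).prod
      = (List.ofFn fun t : Fin p2 =>
          F (Idx.neg (e (T.orderEmbOfFin hT (τ₁ ⟨2 * t.1, by have := t.2; omega⟩))))
            (e (T.orderEmbOfFin hT (τ₁ ⟨2 * t.1 + 1, by have := t.2; omega⟩)))).prod *
        (List.ofFn fun t : Fin q2 =>
          F (Idx.neg (e (Tᶜ.orderEmbOfFin (card_compl_T T hT)
              (τ₂ ⟨2 * t.1, by have := t.2; omega⟩))))
            (e (Tᶜ.orderEmbOfFin (card_compl_T T hT)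
              (τ₂ ⟨2 * t.1 + 1, by have := t.2; omega⟩)))).prod := by
    rw [List.ofFn_add, List.prod_append]
    congr 1
    · congr 1
      congr 1
      funext u
      rw [key1 _ ⟨2 * u.1, by have := u.2; omega⟩ (by simp),
          key1 _ ⟨2 * u.1 + 1, by have := u.2; omega⟩ (by simp)]
    · congr 1
      congr 1
      funext u
      rw [key2 _ ⟨2 * u.1, by have := u.2; omega⟩
            (by show 2*(p2 + u.1) = 2*p2 + 2*u.1; ring),
          key2 _ ⟨2 * u.1 + 1, by have := u.2; omega⟩
            (by show 2*(p2 + u.1) + 1 = 2*p2 + (2*u.1 + 1); ring)]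
  rw [sign_phiPerm, hword, smul_mul_smul_comm, smul_smul]
  congr 1
  push_cast
  ring

end PfLemmas

/-- the splitting formula
`Pf F_I = (p/2)!(q/2)!/(k/2)! ∑_{I = I'⊔I'', |I'|=p, |I''|=q} (-1)^{(I'I'')} Pf F_{I'} Pf F_{I''}`,
where `p = 2 p₂`, `q = 2 q₂` are fixed even numbers with `p + q = k = |I|`. -/
theorem statement8 {A : Type*} [Ring A] [Algebra ℚ A] (n : ℕ)
    (F : Idx n → Idx n → A) (hrel : OrthRel F) (hskew : OrthSkew F)
    (I : Finset (Idx n)) (m p2 q2 : ℕ) (hI : I.card = 2 * m) (hpq : p2 + q2 = m) :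
    PfSet F I =
      ((p2.factorial * q2.factorial : ℚ) / (m.factorial : ℚ)) •
        ∑ I' ∈ I.powerset.filter fun s => s.card = 2 * p2,
          (shuffleSign I' (I \ I') : ℤ) • (PfSet F I' * PfSet F (I \ I')) := by
  classical
  subst hpq
  have hIc : I.card = 2*(p2+q2) := hI
  set e : Fin (2*(p2+q2)) → Idx n := fun t => I.orderEmbOfFin hIc t with he
  have hmono : StrictMono e := (I.orderEmbOfFin hIc).strictMono
  -- the image of `univ` under `e` is `I`
  have himg : Finset.image e Finset.univ = I := by
    apply Finset.eq_of_subset_of_card_le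
    · intro x hx
      simp only [Finset.mem_image] at hx
      obtain ⟨t, _, rfl⟩ := hx
      exact Finset.orderEmbOfFin_mem I hIc t
    · rw [Finset.card_image_of_injective _ hmono.injective, Finset.card_univ,
        Fintype.card_fin, hIc]
  -- facts about images of `T` and `Tᶜ`
  have himgcard : ∀ T : Finset (Fin (2*(p2+q2))), (T.image e).card = T.card :=
    fun T => Finset.card_image_of_injective _ hmono.injective
  have himgsub : ∀ T : Finset (Fin (2*(p2+q2))), T.image e ⊆ I := by
    intro T x hx
    simp only [Finset.mem_image] at hx
    obtain ⟨t, _, rfl⟩ := hx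
    exact Finset.orderEmbOfFin_mem I hIc t
  have hdiff : ∀ T : Finset (Fin (2*(p2+q2))), I \ T.image e = Tᶜ.image e := by
    intro T
    apply (Finset.eq_of_subset_of_card_le ?_ ?_).symm
    · intro x hx
      simp only [Finset.mem_image] at hx
      obtain ⟨t, ht, rfl⟩ := hx
      rw [Finset.mem_sdiff]
      refine ⟨Finset.orderEmbOfFin_mem I hIc t, ?_⟩
      intro hmem
      simp only [Finset.mem_image] at hmem
      obtain ⟨s, hs, hse⟩ := hmem
      have : s = t := hmono.injective hse
      rw [this] at hs
      exact (Finset.mem_compl.mp ht) hs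
    · rw [Finset.card_sdiff_of_subset (himgsub T), hIc, himgcard, himgcard, Finset.card_compl,
        Fintype.card_fin]
  -- reindex the right-hand-side sum by subsets `T` of `Fin (2(p2+q2))`
  have hreindex :
      ∑ I' ∈ I.powerset.filter (fun s => s.card = 2*p2),
          (shuffleSign I' (I \ I') : ℤ) • (PfSet F I' * PfSet F (I \ I'))
        = ∑ T : {T : Finset (Fin (2*(p2+q2))) // T.card = 2*p2},
            (shuffleSign (T.1.image e) (I \ T.1.image e) : ℤ) •
              (PfSet F (T.1.image e) * PfSet F (I \ T.1.image e)) := by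
    symm
    apply Finset.sum_bij (fun T _ => T.1.image e)
    · rintro ⟨T, hT⟩ _
      simp only [Finset.mem_filter, Finset.mem_powerset]
      exact ⟨himgsub T, by rw [himgcard, hT]⟩
    · rintro ⟨T, hT⟩ _ ⟨T', hT'⟩ _ hEq
      apply Subtype.ext
      dsimp only at hEq
      ext x
      constructor
      · intro hx
        have : e x ∈ T'.image e := hEq ▸ Finset.mem_image_of_mem e hx
        simp only [Finset.mem_image] at this
        obtain ⟨y, hy, hyx⟩ := this
        rwa [← hmono.injective hyx]
      · intro hx
        have : e x ∈ T.image e := hEq ▸ Finset.mem_image_of_mem e hx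
        simp only [Finset.mem_image] at this
        obtain ⟨y, hy, hyx⟩ := this
        rwa [← hmono.injective hyx]
    · intro I' hI'
      simp only [Finset.mem_filter, Finset.mem_powerset] at hI'
      refine ⟨⟨Finset.univ.filter (fun x => e x ∈ I'), ?_⟩, Finset.mem_univ _, ?_⟩
      · have himg2 : (Finset.univ.filter (fun x => e x ∈ I')).image e = I' := by
          ext y
          simp only [Finset.mem_image, Finset.mem_filter, Finset.mem_univ, true_and]
          constructor
          · rintro ⟨x, hx, rfl⟩; exact hx
          · intro hy
            have : y ∈ Finset.image e Finset.univ := himg ▸ hI'.1 hy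
            simp only [Finset.mem_image, Finset.mem_univ, true_and] at this
            obtain ⟨x, rfl⟩ := this
            exact ⟨x, hy, rfl⟩
        have := himgcard (Finset.univ.filter (fun x => e x ∈ I'))
        rw [himg2] at this
        rw [← this, hI'.2]
      · dsimp only
        ext y
        simp only [Finset.mem_image, Finset.mem_filter, Finset.mem_univ, true_and]
        constructor
        · rintro ⟨x, hx, rfl⟩; exact hx
        · intro hy
          have : y ∈ Finset.image e Finset.univ := himg ▸ hI'.1 hy
          simp only [Finset.mem_image, Finset.mem_univ, true_and] at this
          obtain ⟨x, rfl⟩ := this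
          exact ⟨x, hy, rfl⟩
    · intros; rfl
  rw [hreindex]
  -- rewrite the left-hand side via the splitting of the permutation sum
  rw [pfSet_eq F I (p2+q2) hIc, pfEnum_eq_ssum, ssum_split F p2 q2 e]
  -- rewrite each summand on the right-hand side
  have hterm : ∀ T : {T : Finset (Fin (2*(p2+q2))) // T.card = 2*p2},
      (shuffleSign (T.1.image e) (I \ T.1.image e) : ℤ) •
          (PfSet F (T.1.image e) * PfSet F (I \ T.1.image e))
        = ((Equiv.Perm.sign (rhoPerm T.1 T.2) : ℤˣ) : ℤ) •
            ((((p2.factorial : ℚ) * 2 ^ p2)⁻¹ •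
                Ssum F (fun v : Fin (2*p2) => e (T.1.orderEmbOfFin T.2 v))) *
             (((q2.factorial : ℚ) * 2 ^ q2)⁻¹ •
                Ssum F (fun v : Fin (2*q2) =>
                  e ((T.1)ᶜ.orderEmbOfFin (card_compl_T T.1 T.2) v)))) := by
    rintro ⟨T, hT⟩
    dsimp only
    rw [hdiff T, show shuffleSign (T.image e) (Tᶜ.image e) = _ from shuffleSign_eq_sign T hT e hmono]
    congr 2
    · rw [pfSet_eq F (T.image e) p2 (by rw [himgcard, hT]), pfEnum_eq_ssum]
      congr 1
      exact (congrArg (Ssum F) (emb_image_eq T hT e hmono)).symm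
    · rw [pfSet_eq F (Tᶜ.image e) q2 (by rw [himgcard, card_compl_T T hT]), pfEnum_eq_ssum]
      congr 1
      exact (congrArg (Ssum F) (emb_image_eq Tᶜ (card_compl_T T hT) e hmono)).symm
  rw [Finset.sum_congr rfl (fun T _ => hterm T)]
  -- now pull the scalars out and compare
  have hswap : ∀ (z : ℤ) (c : ℚ) (x : A), z • (c • x) = c • (z • x) := by
    intro z c x
    rw [← Int.cast_smul_eq_zsmul ℚ z (c • x), smul_smul, mul_comm, ← smul_smul,
      Int.cast_smul_eq_zsmul]
  have hres : ∀ T : {T : Finset (Fin (2*(p2+q2))) // T.card = 2*p2},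
      ((Equiv.Perm.sign (rhoPerm T.1 T.2) : ℤˣ) : ℤ) •
          ((((p2.factorial : ℚ) * 2 ^ p2)⁻¹ •
              Ssum F (fun v : Fin (2*p2) => e (T.1.orderEmbOfFin T.2 v))) *
           (((q2.factorial : ℚ) * 2 ^ q2)⁻¹ •
              Ssum F (fun v : Fin (2*q2) =>
                e ((T.1)ᶜ.orderEmbOfFin (card_compl_T T.1 T.2) v))))
        = (((p2.factorial : ℚ) * 2 ^ p2)⁻¹ * ((q2.factorial : ℚ) * 2 ^ q2)⁻¹) •
            (((Equiv.Perm.sign (rhoPerm T.1 T.2) : ℤˣ) : ℤ) •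
              (Ssum F (fun v : Fin (2*p2) => e (T.1.orderEmbOfFin T.2 v)) *
               Ssum F (fun v : Fin (2*q2) =>
                 e ((T.1)ᶜ.orderEmbOfFin (card_compl_T T.1 T.2) v)))) := by
    intro T
    rw [smul_mul_smul_comm, hswap]
  rw [Finset.sum_congr rfl (fun T _ => hres T), ← Finset.smul_sum, smul_smul]
  congr 1
  have h1 : ((p2+q2).factorial : ℚ) ≠ 0 := Nat.cast_ne_zero.mpr (Nat.factorial_ne_zero _)
  have h2 : (p2.factorial : ℚ) ≠ 0 := Nat.cast_ne_zero.mpr (Nat.factorial_ne_zero _)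
  have h3 : (q2.factorial : ℚ) ≠ 0 := Nat.cast_ne_zero.mpr (Nat.factorial_ne_zero _)
  have h4 : (2:ℚ) ≠ 0 := two_ne_zero
  field_simp
  ring
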